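/- For the type E_8 with exponents 1,7,11,13,17,19,23,29 and dimension 248, and for every hyperbolic triple (a,b,c), we have Σ_{k∈{a,b,c}} Σ_e (1 + 2⌊e/k⌋) < 248, where e runs over the exponents of E_8. -/
import Mathlib

def G (k : ℕ) : ℕ := 1/k + 7/k + 11/k + 13/k + 17/k + 19/k + 23/k + 29/k

lemma Gmono {m k : ℕ} (hm : 0 < m) (h : m ≤ k) : G k ≤ G m := by
  have t : ∀ x : ℕ, x / k ≤ x / m := fun x => Nat.div_le_div_left h hm
  unfold G
  linarith [t 1, t 7, t 11, t 13, t 17, t 19, t 23, t 29]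

lemma key (a b c : ℕ) (ha : 0 < a) (hab : a ≤ b) (hbc : b ≤ c)
    (h : b*c + a*c + a*b < a*b*c) : G a + G b + G c ≤ 111 := by
  have hb : 0 < b := ha.trans_le hab
  have hc : 0 < c := hb.trans_le hbc
  have g2 : G 2 = 56 := by decide
  have g3 : G 3 = 36 := by decide
  have g4 : G 4 = 26 := by decide
  have g5 : G 5 = 20 := by decide
  have g7 : G 7 = 14 := by decide
  rcases Nat.lt_or_ge a 4 with h4 | h4
  · interval_cases a
    · -- a = 1 : contradiction
      exfalso; nlinarith
    · -- a = 2
      rcases Nat.lt_or_ge b 5 with h5 | h5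
      · interval_cases b
        · exfalso; omega
        · -- b = 3, so c ≥ 7
          have hc7 : 7 ≤ c := by omega
          have := Gmono (by norm_num) hc7
          omega
        · -- b = 4, so c ≥ 5
          have hc5 : 5 ≤ c := by omega
          have := Gmono (by norm_num) hc5
          omega
      · have hb5 := Gmono (by norm_num) h5
        have hc5 := Gmono (by norm_num) (h5.trans hbc)
        omega
    · -- a = 3
      rcases Nat.lt_or_ge b 4 with h5 | h5
      · interval_cases b
        have hc4 : 4 ≤ c := by omega
        have := Gmono (by norm_num) hc4
        omega
      · have hb4 := Gmono (by norm_num) h5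
        have hc4 := Gmono (by norm_num) (h5.trans hbc)
        omega
  · have ha4 := Gmono (by norm_num) h4
    have hb4 := Gmono (by norm_num) (h4.trans hab)
    have hc4 := Gmono (by norm_num) ((h4.trans hab).trans hbc)
    omega

theorem typeE8_inequality (a b c : ℕ) (ha : 0 < a) (hab : a ≤ b) (hbc : b ≤ c)
    (hhyp : (1 : ℚ)/a + 1/b + 1/c < 1) :
    (([1, 7, 11, 13, 17, 19, 23, 29] : List ℕ).map
        (fun e => (1 + 2 * (e / a)) + (1 + 2 * (e / b)) + (1 + 2 * (e / c)))).sum < 248 := by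
  have hb : 0 < b := ha.trans_le hab
  have hc : 0 < c := hb.trans_le hbc
  have ha' : (a : ℚ) ≠ 0 := by positivity
  have hb' : (b : ℚ) ≠ 0 := by positivity
  have hc' : (c : ℚ) ≠ 0 := by positivity
  have h : b*c + a*c + a*b < a*b*c := by
    have h2 : ((b*c + a*c + a*b : ℕ) : ℚ) < ((a*b*c : ℕ) : ℚ) := by
      push_cast
      have ha0 : (0:ℚ) < a := by positivity
      have hb0 : (0:ℚ) < b := by positivity
      have hc0 : (0:ℚ) < c := by positivity
      rw [div_add_div _ _ ha' hb', div_add_div _ _ (mul_ne_zero ha' hb') hc',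
        div_lt_one (by positivity)] at hhyp
      nlinarith [hhyp]
    exact_mod_cast h2
  have hk := key a b c ha hab hbc h
  unfold G at hk
  simp only [List.map_cons, List.map_nil, List.sum_cons, List.sum_nil]
  linarith
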